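/- Let λ > 0 and let E₁ : ℝ → ℝ be the 2π-periodic function E₁(t) = ∑_{k∈ℤ} exp(−λ(t + 2kπ)²). Then E₁(0) ≥ E₁(t) ≥ E₁(π) for all t ∈ ℝ; moreover E₁ is decreasing on the interval [0, π]. -/

import Mathlib

set_option maxHeartbeats 1000000


/-- The periodization `E₁(t) = ∑_{k∈ℤ} exp(−λ(t + 2kπ)²)` of the Gaussian. -/
noncomputable def E1 (lam t : ℝ) : ℝ :=
  ∑' k : ℤ, Real.exp (-lam * (t + 2 * (k : ℝ) * Real.pi) ^ 2)

namespace Stmt15Aux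

open Real Set

lemma E1_def (lam t : ℝ) :
    E1 lam t = ∑' k : ℤ, Real.exp (-lam * (t + 2 * (k : ℝ) * π) ^ 2) := rfl

lemma exp2_congr {x y u v : ℝ} (h1 : x = u) (h2 : y = v) :
    Real.exp x + Real.exp y = Real.exp u + Real.exp v := by rw [h1, h2]

/-! ### Elementary exponential inequalities -/

lemma eA {a b : ℝ} (h : a ≤ b) :
    (b - a) * Real.exp (-b) ≤ Real.exp (-a) - Real.exp (-b) := by
  have h1 : Real.exp (-a) = Real.exp (b - a) * Real.exp (-b) := by
    rw [← Real.exp_add]; congr 1; ring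
  nlinarith [Real.add_one_le_exp (b - a), Real.exp_pos (-b)]

lemma eB {a b : ℝ} (h : a ≤ b) :
    Real.exp (-a) - Real.exp (-b) ≤ (b - a) * Real.exp (-a) := by
  have h1 : Real.exp (-b) = Real.exp (-(b - a)) * Real.exp (-a) := by
    rw [← Real.exp_add]; congr 1; ring
  nlinarith [Real.add_one_le_exp (-(b - a)), Real.exp_pos (-a)]

lemma eC {a b : ℝ} (h0 : 0 ≤ a) (h : a ≤ b) :
    a * (1 - Real.exp (-b)) ≤ b * (1 - Real.exp (-a)) := by
  rcases eq_or_lt_of_le (h0.trans h) with hb | hb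
  · have ha : a = 0 := le_antisymm (hb ▸ h) h0
    simp [ha, ← hb]
  · have key := convexOn_exp.2 (Set.mem_univ (-b)) (Set.mem_univ (0 : ℝ))
      (div_nonneg h0 hb.le) (sub_nonneg.2 ((div_le_one hb).2 h)) (by ring)
    simp only [smul_eq_mul, mul_zero, add_zero, Real.exp_zero, mul_one] at key
    have harg : a / b * -b = -a := by field_simp
    rw [harg] at key
    have key2 := mul_le_mul_of_nonneg_left key hb.le
    have hexpand : b * (a / b * Real.exp (-b) + (1 - a / b)) = a * Real.exp (-b) + b - a := by
      field_simp; ring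
    rw [hexpand] at key2
    nlinarith [key2]

/-- Core monotone-comparison step. -/
lemma core {A B u1 u2 : ℝ} (hA : 0 < A) (hB : 0 < B) (h1 : 0 < u1) (h12 : u1 ≤ u2)
    (hkey : B * u2 ≤ A * u1) :
    B * (1 - Real.exp (-u2)) ≤ A * (1 - Real.exp (-u1)) := by
  have hu2 : 0 < u2 := lt_of_lt_of_le h1 h12
  have hex2 : Real.exp (-u2) ≤ 1 := by
    calc Real.exp (-u2) ≤ Real.exp 0 := Real.exp_le_exp.mpr (by linarith)
      _ = 1 := Real.exp_zero
  have hcc := eC h1.le h12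
  have hc : u2 * (B * (1 - Real.exp (-u2))) ≤ u2 * (A * (1 - Real.exp (-u1))) := by
    calc u2 * (B * (1 - Real.exp (-u2))) = (B * u2) * (1 - Real.exp (-u2)) := by ring
      _ ≤ (A * u1) * (1 - Real.exp (-u2)) :=
          mul_le_mul_of_nonneg_right hkey (by linarith)
      _ = A * (u1 * (1 - Real.exp (-u2))) := by ring
      _ ≤ A * (u2 * (1 - Real.exp (-u1))) := mul_le_mul_of_nonneg_left hcc hA.le
      _ = u2 * (A * (1 - Real.exp (-u1))) := by ring
  exact le_of_mul_le_mul_left hc hu2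

/-! ### The monotone pair lemma (used on `[π/2, π]`). -/

lemma pair_mono {lam P v w : ℝ} (hlam : 21 / 50 ≤ lam) (hP : π ≤ P)
    (h0 : 0 ≤ v) (hvw : v ≤ w) (hw : w ≤ π / 2) :
    Real.exp (-(lam * (P - v) ^ 2)) + Real.exp (-(lam * (P + v) ^ 2))
      ≤ Real.exp (-(lam * (P - w) ^ 2)) + Real.exp (-(lam * (P + w) ^ 2)) := by
  rcases eq_or_lt_of_le hvw with rfl | hvw
  · exact le_refl _
  have hpi := Real.pi_gt_d6
  have hlam0 : (0 : ℝ) < lam := by linarith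
  have hwv : 0 < w - v := by linarith
  have hu1pos : 0 < lam * (w - v) * (2 * P - v - w) :=
    mul_pos (mul_pos hlam0 hwv) (by linarith)
  have h12 : lam * (w - v) * (2 * P - v - w) ≤ lam * (w - v) * (2 * P + v + w) := by
    nlinarith [mul_pos hlam0 hwv]
  have e1 : Real.exp (-(lam * (P - v) ^ 2))
      = Real.exp (-(lam * (P - w) ^ 2)) * Real.exp (-(lam * (w - v) * (2 * P - v - w))) := by
    rw [← Real.exp_add]; congr 1; ring
  have e2 : Real.exp (-(lam * (P + w) ^ 2))
      = Real.exp (-(lam * (P + v) ^ 2)) * Real.exp (-(lam * (w - v) * (2 * P + v + w))) := by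
    rw [← Real.exp_add]; congr 1; ring
  have hApos : 0 < Real.exp (-(lam * (P - w) ^ 2)) := Real.exp_pos _
  have hBpos : 0 < Real.exp (-(lam * (P + v) ^ 2)) := Real.exp_pos _
  -- key inequality B * u2 ≤ A * u1
  have hprod : 2 ≤ lam * ((2 * P + v - w) * (2 * P - v - w)) := by
    have f1 : (3 : ℝ) * π / 2 ≤ 2 * P + v - w := by linarith
    have f2 : π ≤ 2 * P - v - w := by linarith
    have f4 : (3 * π / 2) * π ≤ (2 * P + v - w) * (2 * P - v - w) :=
      mul_le_mul f1 f2 (by linarith) (by linarith)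
    calc (2 : ℝ) ≤ (21 / 50) * ((3 * π / 2) * π) := by nlinarith
      _ ≤ lam * ((2 * P + v - w) * (2 * P - v - w)) :=
          mul_le_mul hlam f4 (by positivity) (by linarith)
  have hz : 0 ≤ lam * (v + w) * (w - v) :=
    mul_nonneg (mul_nonneg hlam0.le (by linarith)) hwv.le
  have hup' := mul_le_mul_of_nonneg_left hprod hz
  have hXexp := Real.add_one_le_exp (lam * (v + w) * (2 * P + v - w))
  have hup : lam * (w - v) * (2 * P + v + w)
      ≤ Real.exp (lam * (v + w) * (2 * P + v - w)) * (lam * (w - v) * (2 * P - v - w)) := by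
    nlinarith [hu1pos, hup']
  have hABX : Real.exp (-(lam * (P - w) ^ 2))
      = Real.exp (-(lam * (P + v) ^ 2)) * Real.exp (lam * (v + w) * (2 * P + v - w)) := by
    rw [← Real.exp_add]; congr 1; ring
  have hkey : Real.exp (-(lam * (P + v) ^ 2)) * (lam * (w - v) * (2 * P + v + w))
      ≤ Real.exp (-(lam * (P - w) ^ 2)) * (lam * (w - v) * (2 * P - v - w)) := by
    rw [hABX]
    calc Real.exp (-(lam * (P + v) ^ 2)) * (lam * (w - v) * (2 * P + v + w))
        ≤ Real.exp (-(lam * (P + v) ^ 2)) *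
            (Real.exp (lam * (v + w) * (2 * P + v - w)) * (lam * (w - v) * (2 * P - v - w))) :=
          mul_le_mul_of_nonneg_left hup hBpos.le
      _ = Real.exp (-(lam * (P + v) ^ 2)) * Real.exp (lam * (v + w) * (2 * P + v - w)) *
            (lam * (w - v) * (2 * P - v - w)) := by ring
  have hmain := core hApos hBpos hu1pos h12 hkey
  rw [e1, e2]
  nlinarith [hmain]

/-! ### The quantitative pair bound (used on `[0, π/2]`). -/

lemma pair_quant {lam P s t : ℝ} (hlam : 0 < lam) (hP : 2 * π ≤ P)
    (h0 : 0 ≤ s) (hst : s ≤ t) (ht : t ≤ π / 2) :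
    (Real.exp (-(lam * (P + t) ^ 2)) + Real.exp (-(lam * (P - t) ^ 2)))
      - (Real.exp (-(lam * (P + s) ^ 2)) + Real.exp (-(lam * (P - s) ^ 2)))
      ≤ (lam * (t - s) * t * Real.exp (-(lam * t ^ 2)))
          * (8 * lam * P ^ 2 * Real.exp (-(lam * (P * (P - π))))) := by
  have hpi := Real.pi_gt_d6
  have hPt : 0 < P - t := by linarith
  have ht0 : 0 ≤ t := h0.trans hst
  have hts : (0:ℝ) ≤ t - s := by linarith
  have hh1 : (0:ℝ) ≤ lam * (t - s) * (2 * P - s - t) :=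
    mul_nonneg (mul_nonneg hlam.le hts) (by linarith)
  have hh2 : (0:ℝ) ≤ lam * (t - s) * (2 * P + s + t) :=
    mul_nonneg (mul_nonneg hlam.le hts) (by linarith)
  have hh3 : (0:ℝ) ≤ lam * t * (4 * P) :=
    mul_nonneg (mul_nonneg hlam.le ht0) (by linarith)
  have d1 : Real.exp (-(lam * (P - t) ^ 2)) - Real.exp (-(lam * (P - s) ^ 2))
      ≤ (lam * (P - s) ^ 2 - lam * (P - t) ^ 2) * Real.exp (-(lam * (P - t) ^ 2)) :=
    eB (by nlinarith [hh1])
  have d2' := eA (a := lam * (P + s) ^ 2) (b := lam * (P + t) ^ 2) (by nlinarith [hh2])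
  have d3 : Real.exp (-(lam * (P - t) ^ 2)) - Real.exp (-(lam * (P + t) ^ 2))
      ≤ (lam * (P + t) ^ 2 - lam * (P - t) ^ 2) * Real.exp (-(lam * (P - t) ^ 2)) :=
    eB (by nlinarith [hh3])
  have hXpos : 0 < Real.exp (-(lam * (P - t) ^ 2)) := Real.exp_pos _
  have hYpos : 0 < Real.exp (-(lam * (P + t) ^ 2)) := Real.exp_pos _
  have hfac : 0 ≤ 2 * P * (lam * (t - s)) :=
    mul_nonneg (by linarith) (mul_nonneg hlam.le (by linarith))
  have d3' := mul_le_mul_of_nonneg_left d3 hfac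
  -- main combination
  have main : (Real.exp (-(lam * (P + t) ^ 2)) + Real.exp (-(lam * (P - t) ^ 2)))
      - (Real.exp (-(lam * (P + s) ^ 2)) + Real.exp (-(lam * (P - s) ^ 2)))
      ≤ 8 * lam ^ 2 * P ^ 2 * t * (t - s) * Real.exp (-(lam * (P - t) ^ 2)) := by
    nlinarith [d1, d2', d3', hXpos, hYpos,
      mul_nonneg (mul_nonneg hlam.le (show (0:ℝ) ≤ t - s by linarith))
        (mul_nonneg (show (0:ℝ) ≤ s + t by linarith) (by positivity :
          (0:ℝ) ≤ Real.exp (-(lam * (P - t) ^ 2)) + Real.exp (-(lam * (P + t) ^ 2))))]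
  have hXle : Real.exp (-(lam * (P - t) ^ 2))
      ≤ Real.exp (-(lam * t ^ 2)) * Real.exp (-(lam * (P * (P - π)))) := by
    rw [← Real.exp_add]
    apply Real.exp_le_exp.mpr
    nlinarith [mul_nonneg (mul_nonneg hlam.le (show (0:ℝ) ≤ P by linarith))
      (show (0:ℝ) ≤ π - 2 * t by linarith)]
  calc (Real.exp (-(lam * (P + t) ^ 2)) + Real.exp (-(lam * (P - t) ^ 2)))
      - (Real.exp (-(lam * (P + s) ^ 2)) + Real.exp (-(lam * (P - s) ^ 2)))
      ≤ 8 * lam ^ 2 * P ^ 2 * t * (t - s) * Real.exp (-(lam * (P - t) ^ 2)) := main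
    _ ≤ 8 * lam ^ 2 * P ^ 2 * t * (t - s)
          * (Real.exp (-(lam * t ^ 2)) * Real.exp (-(lam * (P * (P - π))))) := by
        apply mul_le_mul_of_nonneg_left hXle
        have h1 : (0:ℝ) ≤ t - s := by linarith
        have h2 : (0:ℝ) ≤ 8 * lam ^ 2 * P ^ 2 * t := by positivity
        exact mul_nonneg h2 h1
    _ = (lam * (t - s) * t * Real.exp (-(lam * t ^ 2)))
          * (8 * lam * P ^ 2 * Real.exp (-(lam * (P * (P - π))))) := by ring

lemma sq_le_pow4 (n : ℕ) : ((n : ℝ) + 1) ^ 2 ≤ 4 ^ n := by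
  induction n with
  | zero => norm_num
  | succ k ih =>
      have hk : (0 : ℝ) ≤ (k : ℝ) := Nat.cast_nonneg k
      push_cast [pow_succ]
      push_cast at ih
      nlinarith [ih, hk]

lemma sq_le_pow52 (n : ℕ) : ((n : ℝ) + 2) ^ 2 ≤ 4 * (5 / 2) ^ n := by
  induction n with
  | zero => norm_num
  | succ k ih =>
      have hk : (0 : ℝ) ≤ (k : ℝ) := Nat.cast_nonneg k
      push_cast [pow_succ]
      push_cast at ih
      nlinarith [ih, hk]

/-! ### Summability -/

lemma summable_master {lam : ℝ} (hlam : 0 < lam) (c : ℝ) :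
    Summable (fun k : ℤ => Real.exp (-lam * (c + 2 * (k : ℝ) * π) ^ 2)) := by
  have hpi : (0 : ℝ) < π := Real.pi_pos
  have hT : 0 < 4 * lam * π := by positivity
  have h := (summable_pow_mul_jacobiTheta₂_term_bound (2 * lam * |c|) hT 0).mul_left
    (Real.exp (-lam * c ^ 2))
  refine h.of_nonneg_of_le (fun n => (Real.exp_pos _).le) (fun n => ?_)
  rw [pow_zero, one_mul, ← Real.exp_add]
  apply Real.exp_le_exp.mpr
  have habs : -(c * (n : ℝ)) ≤ |c| * |(n : ℝ)| := by
    rw [← abs_mul]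
    calc -(c * (n : ℝ)) ≤ |(-(c * (n : ℝ)))| := le_abs_self _
      _ = |c * (n : ℝ)| := abs_neg _
  have h2 := mul_le_mul_of_nonneg_left habs (show (0 : ℝ) ≤ 4 * lam * π by positivity)
  rw [Int.cast_abs]
  nlinarith [h2]

lemma summable_pairs {lam : ℝ} (hlam : 0 < lam) (t : ℝ) :
    Summable (fun n : ℕ => Real.exp (-lam * (t + 2 * (n : ℝ) * π) ^ 2)
      + Real.exp (-lam * (t - 2 * ((n : ℝ) + 1) * π) ^ 2)) := by
  refine ((summable_master hlam t).nat_add_neg_add_one).congr fun n => ?_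
  exact exp2_congr (by push_cast; ring) (by push_cast; ring)

lemma summable_plus {lam : ℝ} (hlam : 0 < lam) (t : ℝ) :
    Summable (fun n : ℕ => Real.exp (-lam * (t + 2 * ((n : ℝ) + 1) * π) ^ 2)) := by
  have h := (summable_master hlam t).comp_injective
    (i := fun n : ℕ => (n : ℤ) + 1) (fun a b h => by simpa using h)
  refine h.congr fun n => ?_
  show Real.exp (-lam * (t + 2 * (((n : ℤ) + 1 : ℤ) : ℝ) * π) ^ 2) = _
  congr 1
  push_cast; ring

lemma summable_minus {lam : ℝ} (hlam : 0 < lam) (t : ℝ) :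
    Summable (fun n : ℕ => Real.exp (-lam * (t - 2 * ((n : ℝ) + 1) * π) ^ 2)) := by
  have h := (summable_master hlam t).comp_injective
    (i := fun n : ℕ => -((n : ℤ) + 1)) (fun a b h => by simpa using h)
  refine h.congr fun n => ?_
  show Real.exp (-lam * (t + 2 * ((-((n : ℤ) + 1) : ℤ) : ℝ) * π) ^ 2) = _
  congr 1
  push_cast; ring

lemma summable_center {lam : ℝ} (hlam : 0 < lam) (t : ℝ) :
    Summable (fun n : ℕ => Real.exp (-lam * (t + 2 * ((n : ℝ) + 1) * π) ^ 2)
      + Real.exp (-lam * (t - 2 * ((n : ℝ) + 1) * π) ^ 2)) :=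
  (summable_plus hlam t).add (summable_minus hlam t)

/-! ### Decompositions of `E1` -/

lemma E1_pairs {lam : ℝ} (hlam : 0 < lam) (t : ℝ) :
    E1 lam t = ∑' n : ℕ, (Real.exp (-lam * (t + 2 * (n : ℝ) * π) ^ 2)
      + Real.exp (-lam * (t - 2 * ((n : ℝ) + 1) * π) ^ 2)) := by
  rw [E1_def, ← tsum_nat_add_neg_add_one (summable_master hlam t)]
  apply tsum_congr
  intro n
  exact exp2_congr (by push_cast; ring) (by push_cast; ring)

lemma E1_center {lam : ℝ} (hlam : 0 < lam) (t : ℝ) :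
    E1 lam t = Real.exp (-lam * t ^ 2)
      + ∑' n : ℕ, (Real.exp (-lam * (t + 2 * ((n : ℝ) + 1) * π) ^ 2)
          + Real.exp (-lam * (t - 2 * ((n : ℝ) + 1) * π) ^ 2)) := by
  have h1 : Summable (fun n : ℕ =>
      Real.exp (-lam * (t + 2 * (((n : ℤ) + 1 : ℤ) : ℝ) * π) ^ 2)) :=
    ((summable_master hlam t).comp_injective (i := fun n : ℕ => (n : ℤ) + 1)
      (fun a b h => by simpa using h))
  have h2 : Summable (fun n : ℕ =>
      Real.exp (-lam * (t + 2 * ((-((n : ℤ) + 1) : ℤ) : ℝ) * π) ^ 2)) :=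
    ((summable_master hlam t).comp_injective (i := fun n : ℕ => -((n : ℤ) + 1))
      (fun a b h => by simpa using h))
  have hsplit := tsum_of_add_one_of_neg_add_one
    (f := fun k : ℤ => Real.exp (-lam * (t + 2 * (k : ℝ) * π) ^ 2)) h1 h2
  have hf0 : Real.exp (-lam * (t + 2 * ((0 : ℤ) : ℝ) * π) ^ 2)
      = Real.exp (-lam * t ^ 2) := by congr 1; push_cast; ring
  calc E1 lam t
      = (∑' n : ℕ, Real.exp (-lam * (t + 2 * (((n : ℤ) + 1 : ℤ) : ℝ) * π) ^ 2))
        + Real.exp (-lam * (t + 2 * ((0 : ℤ) : ℝ) * π) ^ 2)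
        + (∑' n : ℕ, Real.exp (-lam * (t + 2 * ((-((n : ℤ) + 1) : ℤ) : ℝ) * π) ^ 2)) := by
        rw [E1_def]; exact hsplit
    _ = Real.exp (-lam * t ^ 2)
        + ((∑' n : ℕ, Real.exp (-lam * (t + 2 * (((n : ℤ) + 1 : ℤ) : ℝ) * π) ^ 2))
          + (∑' n : ℕ, Real.exp (-lam * (t + 2 * ((-((n : ℤ) + 1) : ℤ) : ℝ) * π) ^ 2))) := by
        rw [hf0]; ring
    _ = Real.exp (-lam * t ^ 2)
        + ∑' n : ℕ, (Real.exp (-lam * (t + 2 * (((n : ℤ) + 1 : ℤ) : ℝ) * π) ^ 2)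
          + Real.exp (-lam * (t + 2 * ((-((n : ℤ) + 1) : ℤ) : ℝ) * π) ^ 2)) := by
        rw [← Summable.tsum_add h1 h2]
    _ = Real.exp (-lam * t ^ 2)
        + ∑' n : ℕ, (Real.exp (-lam * (t + 2 * ((n : ℝ) + 1) * π) ^ 2)
          + Real.exp (-lam * (t - 2 * ((n : ℝ) + 1) * π) ^ 2)) := by
        congr 1
        exact tsum_congr fun n => exp2_congr (by push_cast; ring) (by push_cast; ring)

/-! ### Antitonicity on `[π/2, π]` for `lam ≥ 21/50` -/

lemma anti_high {lam s t : ℝ} (h21 : 21 / 50 ≤ lam) (hs : π / 2 ≤ s) (hst : s ≤ t)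
    (ht : t ≤ π) : E1 lam t ≤ E1 lam s := by
  have hpi : (0 : ℝ) < π := Real.pi_pos
  have hlam : 0 < lam := by linarith
  rw [E1_pairs hlam s, E1_pairs hlam t]
  refine Summable.tsum_le_tsum (fun n => ?_) (summable_pairs hlam t) (summable_pairs hlam s)
  have hn : (0 : ℝ) ≤ (n : ℝ) := Nat.cast_nonneg n
  have hnπ : (0 : ℝ) ≤ 2 * (n : ℝ) * π := by positivity
  have hpm := pair_mono (lam := lam) (P := (2 * (n : ℝ) + 1) * π) h21
    (by nlinarith) (show (0:ℝ) ≤ π - t by linarith) (show π - t ≤ π - s by linarith)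
    (show π - s ≤ π / 2 by linarith)
  have r1 : ∀ u : ℝ, Real.exp (-lam * (u + 2 * (n : ℝ) * π) ^ 2)
      = Real.exp (-(lam * ((2 * (n : ℝ) + 1) * π - (π - u)) ^ 2)) := by
    intro u; congr 1; ring
  have r2 : ∀ u : ℝ, Real.exp (-lam * (u - 2 * ((n : ℝ) + 1) * π) ^ 2)
      = Real.exp (-(lam * ((2 * (n : ℝ) + 1) * π + (π - u)) ^ 2)) := by
    intro u; congr 1; ring
  rw [r1 s, r1 t, r2 s, r2 t]
  exact hpm

/-! ### Antitonicity on `[0, π/2]` for `lam ≥ 21/50` -/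

lemma term_bound {lam s t : ℝ} (h21 : 21 / 50 ≤ lam) (h0 : 0 ≤ s) (hst : s ≤ t)
    (ht : t ≤ π / 2) (n : ℕ) :
    (Real.exp (-lam * (t + 2 * ((n : ℝ) + 1) * π) ^ 2)
        + Real.exp (-lam * (t - 2 * ((n : ℝ) + 1) * π) ^ 2))
      - (Real.exp (-lam * (s + 2 * ((n : ℝ) + 1) * π) ^ 2)
        + Real.exp (-lam * (s - 2 * ((n : ℝ) + 1) * π) ^ 2))
      ≤ (lam * (t - s) * t * Real.exp (-(lam * t ^ 2)))
          * ((32 * lam * π ^ 2 * Real.exp (-(2 * lam * π ^ 2)))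
            * (4 * Real.exp (-(10 * lam * π ^ 2))) ^ n) := by
  have hpi := Real.pi_gt_d6
  have hlam : 0 < lam := by linarith
  have hn : (0 : ℝ) ≤ (n : ℝ) := Nat.cast_nonneg n
  have g1 : ∀ u : ℝ, Real.exp (-lam * (u + 2 * ((n : ℝ) + 1) * π) ^ 2)
      = Real.exp (-(lam * (2 * ((n : ℝ) + 1) * π + u) ^ 2)) := by
    intro u; congr 1; ring
  have g2 : ∀ u : ℝ, Real.exp (-lam * (u - 2 * ((n : ℝ) + 1) * π) ^ 2)
      = Real.exp (-(lam * (2 * ((n : ℝ) + 1) * π - u) ^ 2)) := by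
    intro u; congr 1; ring
  rw [g1 t, g2 t, g1 s, g2 s]
  have hnπ : (0 : ℝ) ≤ (n : ℝ) * π := mul_nonneg hn (by linarith)
  have hq := pair_quant (lam := lam) (P := 2 * ((n : ℝ) + 1) * π) hlam
    (by nlinarith) h0 hst ht
  refine hq.trans ?_
  have hD0 : 0 ≤ lam * (t - s) * t * Real.exp (-(lam * t ^ 2)) :=
    mul_nonneg (mul_nonneg (mul_nonneg hlam.le (by linarith)) (h0.trans hst))
      (Real.exp_pos _).le
  apply mul_le_mul_of_nonneg_left _ hD0
  -- 8 lam P² exp(−lam P(P−π)) ≤ K g^n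
  have e1 : (2 * ((n : ℝ) + 1) * π) ^ 2 = 4 * ((n : ℝ) + 1) ^ 2 * π ^ 2 := by ring
  have e2 : (2 * ((n : ℝ) + 1) * π) * ((2 * ((n : ℝ) + 1) * π) - π)
      = (2 * ((n : ℝ) + 1) * (2 * (n : ℝ) + 1)) * π ^ 2 := by ring
  rw [e1, e2]
  have hgpow : (4 * Real.exp (-(10 * lam * π ^ 2))) ^ n
      = 4 ^ n * Real.exp (-(10 * lam * π ^ 2 * (n : ℝ))) := by
    rw [mul_pow, ← Real.exp_nat_mul]
    congr 1
    push_cast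
    ring
  rw [hgpow]
  have esplit : Real.exp (-(lam * ((2 * ((n : ℝ) + 1) * (2 * (n : ℝ) + 1)) * π ^ 2)))
      = Real.exp (-(2 * lam * π ^ 2)) * Real.exp (-(10 * lam * π ^ 2 * (n : ℝ)))
        * Real.exp (-(lam * π ^ 2 * (4 * (n : ℝ) ^ 2 - 4 * (n : ℝ)))) := by
    rw [← Real.exp_add, ← Real.exp_add]; congr 1; ring
  rw [esplit]
  have h4n : ((n : ℝ) + 1) ^ 2 ≤ 4 ^ n := sq_le_pow4 n
  have hnn : (n : ℝ) ≤ (n : ℝ) ^ 2 := by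
    have h := Nat.le_self_pow (show 2 ≠ 0 by norm_num) n
    exact_mod_cast h
  have hes : Real.exp (-(lam * π ^ 2 * (4 * (n : ℝ) ^ 2 - 4 * (n : ℝ)))) ≤ 1 := by
    calc Real.exp (-(lam * π ^ 2 * (4 * (n : ℝ) ^ 2 - 4 * (n : ℝ))))
        ≤ Real.exp 0 := Real.exp_le_exp.mpr (by
            have hz : (0:ℝ) ≤ lam * π ^ 2 * (4 * (n : ℝ) ^ 2 - 4 * (n : ℝ)) :=
              mul_nonneg (mul_nonneg hlam.le (sq_nonneg π)) (by linarith)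
            linarith)
      _ = 1 := Real.exp_zero
  have hmain : ((n : ℝ) + 1) ^ 2
      * Real.exp (-(lam * π ^ 2 * (4 * (n : ℝ) ^ 2 - 4 * (n : ℝ)))) ≤ 4 ^ n := by
    calc ((n : ℝ) + 1) ^ 2 * Real.exp (-(lam * π ^ 2 * (4 * (n : ℝ) ^ 2 - 4 * (n : ℝ))))
        ≤ ((n : ℝ) + 1) ^ 2 * 1 := mul_le_mul_of_nonneg_left hes (by positivity)
      _ = ((n : ℝ) + 1) ^ 2 := by ring
      _ ≤ 4 ^ n := h4n
  have hpos : (0 : ℝ) ≤ 8 * lam * π ^ 2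
      * (Real.exp (-(2 * lam * π ^ 2)) * Real.exp (-(10 * lam * π ^ 2 * (n : ℝ)))) := by
    positivity
  calc 8 * lam * (4 * ((n : ℝ) + 1) ^ 2 * π ^ 2)
        * (Real.exp (-(2 * lam * π ^ 2)) * Real.exp (-(10 * lam * π ^ 2 * (n : ℝ)))
          * Real.exp (-(lam * π ^ 2 * (4 * (n : ℝ) ^ 2 - 4 * (n : ℝ)))))
      = (8 * lam * π ^ 2 * (Real.exp (-(2 * lam * π ^ 2))
          * Real.exp (-(10 * lam * π ^ 2 * (n : ℝ)))))
        * (4 * (((n : ℝ) + 1) ^ 2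
          * Real.exp (-(lam * π ^ 2 * (4 * (n : ℝ) ^ 2 - 4 * (n : ℝ)))))) := by ring
    _ ≤ (8 * lam * π ^ 2 * (Real.exp (-(2 * lam * π ^ 2))
          * Real.exp (-(10 * lam * π ^ 2 * (n : ℝ))))) * (4 * 4 ^ n) := by
        apply mul_le_mul_of_nonneg_left _ hpos
        exact mul_le_mul_of_nonneg_left hmain (by norm_num)
    _ = 32 * lam * π ^ 2 * Real.exp (-(2 * lam * π ^ 2))
          * (4 ^ n * Real.exp (-(10 * lam * π ^ 2 * (n : ℝ)))) := by ring

lemma anti_mid {lam s t : ℝ} (h21 : 21 / 50 ≤ lam) (h0 : 0 ≤ s) (hst : s ≤ t)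
    (ht : t ≤ π / 2) : E1 lam t ≤ E1 lam s := by
  have hpi := Real.pi_gt_d6
  have hlam : 0 < lam := by linarith
  have hπ2 : (9.8696 : ℝ) ≤ π ^ 2 := by nlinarith
  have ht0 : 0 ≤ t := h0.trans hst
  -- the geometric ratio and leading constant
  have hg0 : (0 : ℝ) ≤ 4 * Real.exp (-(10 * lam * π ^ 2)) := by positivity
  have hg1 : 4 * Real.exp (-(10 * lam * π ^ 2)) ≤ 1 / 2 := by
    have h8 : (8 : ℝ) ≤ Real.exp (10 * lam * π ^ 2) := by
      have := Real.add_one_le_exp (10 * lam * π ^ 2)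
      nlinarith
    rw [Real.exp_neg]
    have hinv : (Real.exp (10 * lam * π ^ 2))⁻¹ ≤ 8⁻¹ :=
      inv_anti₀ (by norm_num) h8
    linarith
  have hg1' : 4 * Real.exp (-(10 * lam * π ^ 2)) < 1 := by linarith
  have hK0 : (0 : ℝ) ≤ 32 * lam * π ^ 2 * Real.exp (-(2 * lam * π ^ 2)) := by positivity
  have hK2 : 2 * (32 * lam * π ^ 2 * Real.exp (-(2 * lam * π ^ 2))) ≤ 1 := by
    have hx8 : (8 : ℝ) ≤ 2 * lam * π ^ 2 := by nlinarith
    have hx0 : (0 : ℝ) < 2 * lam * π ^ 2 := by linarith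
    have hx6 : (2 * lam * π ^ 2) ^ 6 / 720 ≤ Real.exp (2 * lam * π ^ 2) := by
      have h := Real.sum_le_exp_of_nonneg hx0.le 7
      have h2 : (2 * lam * π ^ 2) ^ 6 / 720
          ≤ ∑ i ∈ Finset.range 7, (2 * lam * π ^ 2) ^ i / (Nat.factorial i) := by
        have := Finset.single_le_sum (f := fun i => (2 * lam * π ^ 2) ^ i / (Nat.factorial i))
          (fun i _ => by positivity) (Finset.self_mem_range_succ 6)
        norm_num [Nat.factorial] at this ⊢
        linarith
      linarith
    have h6 : (0 : ℝ) < (2 * lam * π ^ 2) ^ 6 := by positivity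
    have hexpneg : Real.exp (-(2 * lam * π ^ 2)) ≤ 720 / (2 * lam * π ^ 2) ^ 6 := by
      rw [Real.exp_neg, le_div_iff₀ h6]
      calc (Real.exp (2 * lam * π ^ 2))⁻¹ * (2 * lam * π ^ 2) ^ 6
          ≤ (Real.exp (2 * lam * π ^ 2))⁻¹ * (720 * Real.exp (2 * lam * π ^ 2)) := by
            apply mul_le_mul_of_nonneg_left (by linarith) (by positivity)
        _ = 720 := by field_simp
    have hx5 : (32768 : ℝ) ≤ (2 * lam * π ^ 2) ^ 5 := by
      calc (32768 : ℝ) = 8 ^ 5 := by norm_num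
        _ ≤ (2 * lam * π ^ 2) ^ 5 := pow_le_pow_left₀ (by norm_num) hx8 5
    calc 2 * (32 * lam * π ^ 2 * Real.exp (-(2 * lam * π ^ 2)))
        = 32 * (2 * lam * π ^ 2) * Real.exp (-(2 * lam * π ^ 2)) := by ring
      _ ≤ 32 * (2 * lam * π ^ 2) * (720 / (2 * lam * π ^ 2) ^ 6) := by
          apply mul_le_mul_of_nonneg_left hexpneg (by positivity)
      _ = 23040 / (2 * lam * π ^ 2) ^ 5 := by
          field_simp
          ring
      _ ≤ 23040 / 32768 := by
          apply div_le_div_of_nonneg_left (by norm_num) (by norm_num) hx5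
      _ ≤ 1 := by norm_num
  -- sum manipulation
  rw [E1_center hlam s, E1_center hlam t]
  have hsumt := summable_center hlam t
  have hsums := summable_center hlam s
  have hgeosum : Summable (fun n : ℕ =>
      (lam * (t - s) * t * Real.exp (-(lam * t ^ 2)))
        * ((32 * lam * π ^ 2 * Real.exp (-(2 * lam * π ^ 2)))
          * (4 * Real.exp (-(10 * lam * π ^ 2))) ^ n)) := by
    apply Summable.mul_left
    exact (summable_geometric_of_lt_one hg0 hg1').mul_left _
  have hsum : (∑' n : ℕ, (Real.exp (-lam * (t + 2 * ((n : ℝ) + 1) * π) ^ 2)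
        + Real.exp (-lam * (t - 2 * ((n : ℝ) + 1) * π) ^ 2)))
      ≤ ∑' n : ℕ, ((Real.exp (-lam * (s + 2 * ((n : ℝ) + 1) * π) ^ 2)
          + Real.exp (-lam * (s - 2 * ((n : ℝ) + 1) * π) ^ 2))
        + (lam * (t - s) * t * Real.exp (-(lam * t ^ 2)))
          * ((32 * lam * π ^ 2 * Real.exp (-(2 * lam * π ^ 2)))
            * (4 * Real.exp (-(10 * lam * π ^ 2))) ^ n)) := by
    refine Summable.tsum_le_tsum (fun n => ?_) hsumt (hsums.add hgeosum)
    have := term_bound h21 h0 hst ht n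
    linarith
  rw [Summable.tsum_add hsums hgeosum, tsum_mul_left, tsum_mul_left,
    tsum_geometric_of_lt_one hg0 hg1'] at hsum
  -- head comparison
  have hD0 : 0 ≤ lam * (t - s) * t * Real.exp (-(lam * t ^ 2)) :=
    mul_nonneg (mul_nonneg (mul_nonneg hlam.le (by linarith)) ht0)
      (Real.exp_pos _).le
  have hhead : Real.exp (-lam * t ^ 2) ≤ Real.exp (-lam * s ^ 2)
      - lam * (t - s) * t * Real.exp (-(lam * t ^ 2)) := by
    have hts : (0:ℝ) ≤ t - s := by linarith
    have hh5 : (0:ℝ) ≤ lam * (t + s) * (t - s) :=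
      mul_nonneg (mul_nonneg hlam.le (by linarith)) hts
    have h := eA (a := lam * s ^ 2) (b := lam * t ^ 2) (by nlinarith [hh5])
    have hx : Real.exp (-(lam * s ^ 2)) = Real.exp (-lam * s ^ 2) := by ring_nf
    have hy : Real.exp (-(lam * t ^ 2)) = Real.exp (-lam * t ^ 2) := by ring_nf
    have hh6 : (0:ℝ) ≤ lam * s * (t - s) * Real.exp (-(lam * t ^ 2)) :=
      mul_nonneg (mul_nonneg (mul_nonneg hlam.le h0) hts) (Real.exp_pos _).le
    nlinarith [h, hh6, Real.exp_pos (-(lam * t ^ 2))]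
  -- tail estimate
  have htail : (lam * (t - s) * t * Real.exp (-(lam * t ^ 2)))
      * ((32 * lam * π ^ 2 * Real.exp (-(2 * lam * π ^ 2)))
        * (1 - 4 * Real.exp (-(10 * lam * π ^ 2)))⁻¹)
      ≤ lam * (t - s) * t * Real.exp (-(lam * t ^ 2)) := by
    have hden : (0 : ℝ) < 1 - 4 * Real.exp (-(10 * lam * π ^ 2)) := by linarith
    have hinv2 : (1 - 4 * Real.exp (-(10 * lam * π ^ 2)))⁻¹ ≤ 2 := by
      rw [← one_div, div_le_iff₀ hden]
      linarith
    have hfin : (32 * lam * π ^ 2 * Real.exp (-(2 * lam * π ^ 2)))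
        * (1 - 4 * Real.exp (-(10 * lam * π ^ 2)))⁻¹ ≤ 1 := by
      calc (32 * lam * π ^ 2 * Real.exp (-(2 * lam * π ^ 2)))
            * (1 - 4 * Real.exp (-(10 * lam * π ^ 2)))⁻¹
          ≤ (32 * lam * π ^ 2 * Real.exp (-(2 * lam * π ^ 2))) * 2 :=
            mul_le_mul_of_nonneg_left hinv2 hK0
        _ ≤ 1 := by linarith
    calc (lam * (t - s) * t * Real.exp (-(lam * t ^ 2)))
          * ((32 * lam * π ^ 2 * Real.exp (-(2 * lam * π ^ 2)))
            * (1 - 4 * Real.exp (-(10 * lam * π ^ 2)))⁻¹)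
        ≤ (lam * (t - s) * t * Real.exp (-(lam * t ^ 2))) * 1 :=
          mul_le_mul_of_nonneg_left hfin hD0
      _ = lam * (t - s) * t * Real.exp (-(lam * t ^ 2)) := by ring
  linarith [hsum, hhead, htail]

/-! ### The trigonometric estimates for the dual (Fourier) side -/

lemma sin_mul_le (k : ℕ) (x : ℝ) : |Real.sin ((k : ℝ) * x)| ≤ (k : ℝ) * |Real.sin x| := by
  induction k with
  | zero => simp
  | succ m ih =>
      have harg : (((m + 1 : ℕ) : ℝ)) * x = (m : ℝ) * x + x := by push_cast; ring
      rw [harg, Real.sin_add]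
      calc |Real.sin ((m : ℝ) * x) * Real.cos x + Real.cos ((m : ℝ) * x) * Real.sin x|
          ≤ |Real.sin ((m : ℝ) * x) * Real.cos x| + |Real.cos ((m : ℝ) * x) * Real.sin x| :=
            abs_add_le _ _
        _ = |Real.sin ((m : ℝ) * x)| * |Real.cos x|
            + |Real.cos ((m : ℝ) * x)| * |Real.sin x| := by rw [abs_mul, abs_mul]
        _ ≤ |Real.sin ((m : ℝ) * x)| * 1 + 1 * |Real.sin x| := by
            apply add_le_add
            · exact mul_le_mul_of_nonneg_left (Real.abs_cos_le_one x) (abs_nonneg _)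
            · exact mul_le_mul_of_nonneg_right (Real.abs_cos_le_one _) (abs_nonneg _)
        _ ≤ (m : ℝ) * |Real.sin x| + |Real.sin x| := by
            have := ih
            nlinarith [abs_nonneg (Real.sin x)]
        _ = (((m + 1 : ℕ) : ℝ)) * |Real.sin x| := by push_cast; ring

lemma cos_diff_bound (k : ℕ) {s t : ℝ} (h0 : 0 ≤ s) (hst : s ≤ t) (ht : t ≤ π) :
    |Real.cos ((k : ℝ) * s) - Real.cos ((k : ℝ) * t)|
      ≤ (k : ℝ) ^ 2 * (Real.cos s - Real.cos t) := by
  have hpi : (0 : ℝ) < π := Real.pi_pos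
  have hA : Real.cos s - Real.cos t
      = 2 * Real.sin ((s + t) / 2) * Real.sin ((t - s) / 2) := by
    rw [Real.cos_sub_cos]
    rw [show (s - t) / 2 = -((t - s) / 2) by ring, Real.sin_neg]
    ring
  have hk : Real.cos ((k : ℝ) * s) - Real.cos ((k : ℝ) * t)
      = 2 * Real.sin ((k : ℝ) * ((s + t) / 2)) * Real.sin ((k : ℝ) * ((t - s) / 2)) := by
    rw [Real.cos_sub_cos]
    rw [show ((k : ℝ) * s + (k : ℝ) * t) / 2 = (k : ℝ) * ((s + t) / 2) by ring,
      show ((k : ℝ) * s - (k : ℝ) * t) / 2 = -((k : ℝ) * ((t - s) / 2)) by ring,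
      Real.sin_neg]
    ring
  have hsA : 0 ≤ Real.sin ((s + t) / 2) :=
    Real.sin_nonneg_of_nonneg_of_le_pi (by linarith) (by linarith)
  have hsB : 0 ≤ Real.sin ((t - s) / 2) :=
    Real.sin_nonneg_of_nonneg_of_le_pi (by linarith) (by linarith)
  rw [hA, hk]
  have e1 : |2 * Real.sin ((k : ℝ) * ((s + t) / 2)) * Real.sin ((k : ℝ) * ((t - s) / 2))|
      = 2 * |Real.sin ((k : ℝ) * ((s + t) / 2))| * |Real.sin ((k : ℝ) * ((t - s) / 2))| := by
    rw [abs_mul, abs_mul]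
    norm_num
  rw [e1]
  have b1 := sin_mul_le k ((s + t) / 2)
  have b2 := sin_mul_le k ((t - s) / 2)
  have hkn : (0 : ℝ) ≤ (k : ℝ) := Nat.cast_nonneg k
  calc 2 * |Real.sin ((k : ℝ) * ((s + t) / 2))| * |Real.sin ((k : ℝ) * ((t - s) / 2))|
      ≤ 2 * ((k : ℝ) * |Real.sin ((s + t) / 2)|) * ((k : ℝ) * |Real.sin ((t - s) / 2)|) := by
        apply mul_le_mul
        · exact mul_le_mul_of_nonneg_left b1 (by norm_num)
        · exact b2
        · exact abs_nonneg _
        · positivity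
    _ = (k : ℝ) ^ 2 * (2 * |Real.sin ((s + t) / 2)| * |Real.sin ((t - s) / 2)|) := by ring
    _ = (k : ℝ) ^ 2 * (2 * Real.sin ((s + t) / 2) * Real.sin ((t - s) / 2)) := by
        rw [abs_of_nonneg hsA, abs_of_nonneg hsB]

/-! ### Summability on the Fourier side -/

lemma summable_q {lam : ℝ} (hlam : 0 < lam) :
    Summable (fun n : ℤ => Real.exp (-(n : ℝ) ^ 2 / (4 * lam))) := by
  have h := summable_master (lam := (16 * π ^ 2 * lam)⁻¹) (by positivity) 0
  refine h.congr fun n => ?_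
  congr 1
  have hπ : (π : ℝ) ≠ 0 := Real.pi_ne_zero
  have hlamne : lam ≠ 0 := hlam.ne'
  field_simp
  ring

lemma summable_qcos {lam : ℝ} (hlam : 0 < lam) (u : ℝ) :
    Summable (fun n : ℤ => Real.exp (-(n : ℝ) ^ 2 / (4 * lam)) * Real.cos ((n : ℝ) * u)) := by
  apply Summable.of_abs
  refine Summable.of_nonneg_of_le (fun n => abs_nonneg _) (fun n => ?_) (summable_q hlam)
  rw [abs_mul, abs_of_pos (Real.exp_pos _)]
  calc Real.exp (-(n : ℝ) ^ 2 / (4 * lam)) * |Real.cos ((n : ℝ) * u)|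
      ≤ Real.exp (-(n : ℝ) ^ 2 / (4 * lam)) * 1 :=
        mul_le_mul_of_nonneg_left (Real.abs_cos_le_one _) (Real.exp_pos _).le
    _ = Real.exp (-(n : ℝ) ^ 2 / (4 * lam)) := by ring

lemma re_aux (x y : ℝ) : (((x : ℝ) : ℂ) - ((y : ℝ) : ℂ) * Complex.I).re = x := by simp

lemma im_aux (x y : ℝ) : (((x : ℝ) : ℂ) - ((y : ℝ) : ℂ) * Complex.I).im = -y := by simp

/-! ### The Poisson summation identity for `E1` -/

lemma E1_dual {lam : ℝ} (hlam : 0 < lam) (t : ℝ) :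
    E1 lam t = Real.sqrt ((4 * π * lam)⁻¹)
      * ∑' n : ℤ, Real.exp (-(n : ℝ) ^ 2 / (4 * lam)) * Real.cos ((n : ℝ) * t) := by
  have hpi : (0 : ℝ) < π := Real.pi_pos
  have ha' : (0 : ℝ) < (4 * π * lam)⁻¹ := by positivity
  have ha : 0 < (((4 * π * lam)⁻¹ : ℝ) : ℂ).re := by
    rw [Complex.ofReal_re]; exact ha'
  have hπC : ((π : ℝ) : ℂ) ≠ 0 := Complex.ofReal_ne_zero.mpr Real.pi_ne_zero
  have hlamC : ((lam : ℝ) : ℂ) ≠ 0 := Complex.ofReal_ne_zero.mpr hlam.ne'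
  have key := Complex.tsum_exp_neg_quadratic ha
    (-Complex.I * (t : ℂ) / (2 * ((π : ℝ) : ℂ)))
  have hterm1 : ∀ n : ℤ, -((π : ℝ) : ℂ) * (((4 * π * lam)⁻¹ : ℝ) : ℂ) * (n : ℂ) ^ 2
      + 2 * ((π : ℝ) : ℂ) * (-Complex.I * (t : ℂ) / (2 * ((π : ℝ) : ℂ))) * (n : ℂ)
      = ((-(n : ℝ) ^ 2 / (4 * lam) : ℝ) : ℂ) - (((n : ℝ) * t : ℝ) : ℂ) * Complex.I := by
    intro n
    push_cast
    field_simp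
    ring
  have hIb : Complex.I * (-Complex.I * (t : ℂ) / (2 * ((π : ℝ) : ℂ)))
      = (t : ℂ) / (2 * ((π : ℝ) : ℂ)) := by
    have h1 : Complex.I * (-Complex.I * (t : ℂ) / (2 * ((π : ℝ) : ℂ)))
        = -(Complex.I * Complex.I) * (t : ℂ) / (2 * ((π : ℝ) : ℂ)) := by ring
    rw [h1, Complex.I_mul_I]
    ring
  have hterm2 : ∀ n : ℤ, -((π : ℝ) : ℂ) / (((4 * π * lam)⁻¹ : ℝ) : ℂ)
      * ((n : ℂ) + Complex.I * (-Complex.I * (t : ℂ) / (2 * ((π : ℝ) : ℂ)))) ^ 2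
      = ((-lam * (t + 2 * (n : ℝ) * π) ^ 2 : ℝ) : ℂ) := by
    intro n
    rw [hIb]
    push_cast
    field_simp
    ring
  have hkeyL : (∑' n : ℤ, Complex.exp (((-(n : ℝ) ^ 2 / (4 * lam) : ℝ) : ℂ)
        - (((n : ℝ) * t : ℝ) : ℂ) * Complex.I))
      = 1 / (((4 * π * lam)⁻¹ : ℝ) : ℂ) ^ (1 / 2 : ℂ) * ((E1 lam t : ℝ) : ℂ) := by
    calc (∑' n : ℤ, Complex.exp (((-(n : ℝ) ^ 2 / (4 * lam) : ℝ) : ℂ)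
          - (((n : ℝ) * t : ℝ) : ℂ) * Complex.I))
        = ∑' n : ℤ, Complex.exp (-((π : ℝ) : ℂ) * (((4 * π * lam)⁻¹ : ℝ) : ℂ) * (n : ℂ) ^ 2
            + 2 * ((π : ℝ) : ℂ) * (-Complex.I * (t : ℂ) / (2 * ((π : ℝ) : ℂ))) * (n : ℂ)) :=
          tsum_congr fun n => by rw [hterm1 n]
      _ = 1 / (((4 * π * lam)⁻¹ : ℝ) : ℂ) ^ (1 / 2 : ℂ)
            * ∑' n : ℤ, Complex.exp (-((π : ℝ) : ℂ) / (((4 * π * lam)⁻¹ : ℝ) : ℂ)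
              * ((n : ℂ) + Complex.I * (-Complex.I * (t : ℂ) / (2 * ((π : ℝ) : ℂ)))) ^ 2) := key
      _ = 1 / (((4 * π * lam)⁻¹ : ℝ) : ℂ) ^ (1 / 2 : ℂ)
            * ∑' n : ℤ, ((Real.exp (-lam * (t + 2 * (n : ℝ) * π) ^ 2) : ℝ) : ℂ) := by
          congr 1
          exact tsum_congr fun n => by rw [hterm2 n, ← Complex.ofReal_exp]
      _ = 1 / (((4 * π * lam)⁻¹ : ℝ) : ℂ) ^ (1 / 2 : ℂ) * ((E1 lam t : ℝ) : ℂ) := by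
          rw [E1_def, Complex.ofReal_tsum]
  have hcne : (((4 * π * lam)⁻¹ : ℝ) : ℂ) ^ (1 / 2 : ℂ) ≠ 0 := by
    rw [Ne, Complex.cpow_eq_zero_iff]
    push_neg
    intro h
    exact absurd h (Complex.ofReal_ne_zero.mpr (ne_of_gt ha'))
  have hE : ((E1 lam t : ℝ) : ℂ) = (((4 * π * lam)⁻¹ : ℝ) : ℂ) ^ (1 / 2 : ℂ)
      * ∑' n : ℤ, Complex.exp (((-(n : ℝ) ^ 2 / (4 * lam) : ℝ) : ℂ)
        - (((n : ℝ) * t : ℝ) : ℂ) * Complex.I) := by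
    rw [hkeyL, ← mul_assoc, mul_one_div, div_self hcne, one_mul]
  have hsq : (((4 * π * lam)⁻¹ : ℝ) : ℂ) ^ (1 / 2 : ℂ)
      = ((Real.sqrt ((4 * π * lam)⁻¹) : ℝ) : ℂ) := by
    have h := Complex.ofReal_cpow ha'.le (1 / 2 : ℝ)
    rw [show (((1 / 2 : ℝ)) : ℂ) = (1 / 2 : ℂ) by norm_num] at h
    rw [← h, Real.sqrt_eq_rpow]
  have hzsum : Summable (fun n : ℤ => Complex.exp (((-(n : ℝ) ^ 2 / (4 * lam) : ℝ) : ℂ)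
      - (((n : ℝ) * t : ℝ) : ℂ) * Complex.I)) := by
    apply Summable.of_norm
    refine (summable_q hlam).congr fun n => ?_
    rw [Complex.norm_exp, re_aux]
  have hre : ∀ n : ℤ, (Complex.exp (((-(n : ℝ) ^ 2 / (4 * lam) : ℝ) : ℂ)
      - (((n : ℝ) * t : ℝ) : ℂ) * Complex.I)).re
      = Real.exp (-(n : ℝ) ^ 2 / (4 * lam)) * Real.cos ((n : ℝ) * t) := by
    intro n
    rw [Complex.exp_re, re_aux, im_aux, Real.cos_neg]
  calc E1 lam t = ((E1 lam t : ℝ) : ℂ).re := (Complex.ofReal_re _).symm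
    _ = (((Real.sqrt ((4 * π * lam)⁻¹) : ℝ) : ℂ)
        * ∑' n : ℤ, Complex.exp (((-(n : ℝ) ^ 2 / (4 * lam) : ℝ) : ℂ)
          - (((n : ℝ) * t : ℝ) : ℂ) * Complex.I)).re := by rw [hE, hsq]
    _ = Real.sqrt ((4 * π * lam)⁻¹)
        * (∑' n : ℤ, Complex.exp (((-(n : ℝ) ^ 2 / (4 * lam) : ℝ) : ℂ)
          - (((n : ℝ) * t : ℝ) : ℂ) * Complex.I)).re := Complex.re_ofReal_mul _ _
    _ = Real.sqrt ((4 * π * lam)⁻¹)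
        * ∑' n : ℤ, Real.exp (-(n : ℝ) ^ 2 / (4 * lam)) * Real.cos ((n : ℝ) * t) := by
        rw [Complex.re_tsum hzsum]
        congr 1
        exact tsum_congr fun n => hre n

/-! ### Antitonicity from the Fourier side, for `lam ≤ 21/50` -/

lemma dual_mono {lam s t : ℝ} (hlam : 0 < lam) (hlam' : lam ≤ 21 / 50)
    (h0 : 0 ≤ s) (hst : s ≤ t) (ht : t ≤ π) :
    ∑' n : ℤ, Real.exp (-(n : ℝ) ^ 2 / (4 * lam)) * Real.cos ((n : ℝ) * t)
      ≤ ∑' n : ℤ, Real.exp (-(n : ℝ) ^ 2 / (4 * lam)) * Real.cos ((n : ℝ) * s) := by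
  have h4 : (0 : ℝ) < 4 * lam := by linarith
  have hy0 : 0 < Real.exp (-(1 / (4 * lam))) := Real.exp_pos _
  have hy57 : Real.exp (-(1 / (4 * lam))) ≤ 557 / 1000 := by
    have h1 : (25 / 42 : ℝ) ≤ 1 / (4 * lam) := by
      rw [le_div_iff₀ h4]; linarith
    have hx : (1000 / 557 : ℝ) ≤ Real.exp (1 / (4 * lam)) := by
      have hsum := Real.sum_le_exp_of_nonneg (show (0 : ℝ) ≤ 25 / 42 by norm_num) 4
      have hval : (1000 / 557 : ℝ)
          ≤ ∑ i ∈ Finset.range 4, (25 / 42 : ℝ) ^ i / (Nat.factorial i) := by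
        norm_num [Finset.sum_range_succ, Nat.factorial]
      calc (1000 / 557 : ℝ) ≤ _ := hval
        _ ≤ Real.exp (25 / 42) := hsum
        _ ≤ Real.exp (1 / (4 * lam)) := Real.exp_le_exp.mpr h1
    rw [Real.exp_neg]
    calc (Real.exp (1 / (4 * lam)))⁻¹ ≤ ((1000 / 557 : ℝ))⁻¹ :=
        inv_anti₀ (by norm_num) hx
      _ = 557 / 1000 := by norm_num
  set y := Real.exp (-(1 / (4 * lam))) with hy
  have hD0 : 0 ≤ Real.cos s - Real.cos t := by
    have := Real.cos_le_cos_of_nonneg_of_le_pi h0 ht hst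
    linarith
  set D := Real.cos s - Real.cos t with hD
  set b : ℤ → ℝ := fun n => Real.exp (-(n : ℝ) ^ 2 / (4 * lam))
    * (Real.cos ((n : ℝ) * s) - Real.cos ((n : ℝ) * t)) with hb
  have hcos2 : ∀ x z : ℝ, |Real.cos x - Real.cos z| ≤ 2 := by
    intro x z
    have h1 := abs_le.mp (Real.abs_cos_le_one x)
    have h2 := abs_le.mp (Real.abs_cos_le_one z)
    exact abs_le.mpr ⟨by linarith [h1.1, h2.2], by linarith [h1.2, h2.1]⟩
  have hbs : Summable b := by
    apply Summable.of_abs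
    refine Summable.of_nonneg_of_le (fun n => abs_nonneg _) (fun n => ?_)
      ((summable_q hlam).mul_left 2)
    rw [hb]
    rw [abs_mul, abs_of_pos (Real.exp_pos _)]
    calc Real.exp (-(n : ℝ) ^ 2 / (4 * lam)) * |Real.cos ((n : ℝ) * s) - Real.cos ((n : ℝ) * t)|
        ≤ Real.exp (-(n : ℝ) ^ 2 / (4 * lam)) * 2 :=
          mul_le_mul_of_nonneg_left (hcos2 _ _) (Real.exp_pos _).le
      _ = 2 * Real.exp (-(n : ℝ) ^ 2 / (4 * lam)) := by ring
  have hsub : (∑' n : ℤ, Real.exp (-(n : ℝ) ^ 2 / (4 * lam)) * Real.cos ((n : ℝ) * s))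
      - (∑' n : ℤ, Real.exp (-(n : ℝ) ^ 2 / (4 * lam)) * Real.cos ((n : ℝ) * t))
      = ∑' n : ℤ, b n := by
    rw [← Summable.tsum_sub (summable_qcos hlam s) (summable_qcos hlam t)]
    exact tsum_congr fun n => by rw [hb]; ring
  suffices hpos : 0 ≤ ∑' n : ℤ, b n by linarith [hsub, hpos]
  -- split the sum over ℤ into natural pairs
  have hBnat : Summable (fun n : ℕ => b n) :=
    hbs.comp_injective (fun a b h => by simpa using h)
  have hB1 : Summable (fun n : ℕ => b ((n : ℤ) + 1)) :=
    hbs.comp_injective (fun a b h => by simpa using h)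
  have hB2 : Summable (fun n : ℕ => b ((n : ℤ) + 2)) :=
    hbs.comp_injective (fun a b h => by simpa using h)
  have hbsymm : ∀ n : ℕ, b (-((n : ℤ) + 1)) = b ((n : ℤ) + 1) := by
    intro n
    rw [hb]
    push_cast
    rw [show (-((n : ℝ) + 1)) ^ 2 = ((n : ℝ) + 1) ^ 2 by ring,
      show (-((n : ℝ) + 1)) * s = -(((n : ℝ) + 1) * s) by ring,
      show (-((n : ℝ) + 1)) * t = -(((n : ℝ) + 1) * t) by ring,
      Real.cos_neg, Real.cos_neg]
  have hsplit : ∑' n : ℤ, b n = (∑' n : ℕ, b n) + ∑' n : ℕ, b ((n : ℤ) + 1) := by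
    rw [← tsum_nat_add_neg_add_one hbs]
    rw [← Summable.tsum_add hBnat hB1]
    exact tsum_congr fun n => by rw [hbsymm n]
  have hb0 : b (0 : ℤ) = 0 := by
    rw [hb]; norm_num
  have hzero : ∑' n : ℕ, b (n : ℤ) = ∑' n : ℕ, b ((n : ℤ) + 1) := by
    rw [Summable.tsum_eq_zero_add hBnat]
    have h00 : b (((0 : ℕ) : ℤ)) = 0 := by
      rw [hb]; norm_num
    rw [h00, zero_add]
    exact tsum_congr fun n => by norm_cast
  have hb1 : b (1 : ℤ) = y * D := by
    rw [hb, hy, hD]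
    push_cast
    rw [show -(1 : ℝ) ^ 2 / (4 * lam) = -(1 / (4 * lam)) by ring, one_mul, one_mul]
  have hshift : ∑' n : ℕ, b ((n : ℤ) + 1) = y * D + ∑' n : ℕ, b ((n : ℤ) + 2) := by
    rw [Summable.tsum_eq_zero_add hB1]
    have h01 : b (((0 : ℕ) : ℤ) + 1) = y * D := by
      rw [show ((0 : ℕ) : ℤ) + 1 = (1 : ℤ) by norm_num]; exact hb1
    rw [h01]
    congr 1 <;> exact tsum_congr fun n => by norm_cast
  -- the geometric ratio
  have hy4 : y ^ 4 ≤ (557 / 1000 : ℝ) ^ 4 := pow_le_pow_left₀ hy0.le hy57 4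
  have hr1 : (5 / 2 : ℝ) * y ^ 4 < 1 := by nlinarith [hy4]
  have hr0 : (0 : ℝ) ≤ (5 / 2 : ℝ) * y ^ 4 := by positivity
  -- tail bound
  have htail : ∀ n : ℕ, -(4 * D * y ^ 4 * ((5 / 2 : ℝ) * y ^ 4) ^ n) ≤ b ((n : ℤ) + 2) := by
    intro n
    have habs : |b ((n : ℤ) + 2)| ≤ 4 * D * y ^ 4 * ((5 / 2 : ℝ) * y ^ 4) ^ n := by
      have hcd := cos_diff_bound (n + 2) h0 hst ht
      have h1 : |Real.cos ((((n : ℤ) + 2 : ℤ) : ℝ) * s) - Real.cos ((((n : ℤ) + 2 : ℤ) : ℝ) * t)|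
          ≤ ((n : ℝ) + 2) ^ 2 * D := by
        rw [hD]
        push_cast
        push_cast at hcd
        exact hcd
      have h2 : Real.exp (-(((n : ℤ) + 2 : ℤ) : ℝ) ^ 2 / (4 * lam)) ≤ y ^ (4 * (n + 1)) := by
        rw [hy, ← Real.exp_nat_mul]
        apply Real.exp_le_exp.mpr
        have hnum : 4 * ((n : ℝ) + 1) ≤ ((n : ℝ) + 2) ^ 2 := by nlinarith [sq_nonneg (n : ℝ)]
        have hrw : ((4 * (n + 1) : ℕ) : ℝ) * -(1 / (4 * lam))
            = (-(4 * ((n : ℝ) + 1))) / (4 * lam) := by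
          push_cast
          field_simp
        rw [hrw]
        rw [show -(((n : ℤ) + 2 : ℤ) : ℝ) ^ 2 / (4 * lam)
          = (-(((n : ℝ) + 2) ^ 2)) / (4 * lam) by push_cast; ring]
        rw [div_le_div_iff₀ h4 h4]
        nlinarith [mul_le_mul_of_nonneg_right hnum h4.le]
      rw [hb]
      rw [abs_mul, abs_of_pos (Real.exp_pos _)]
      calc Real.exp (-(((n : ℤ) + 2 : ℤ) : ℝ) ^ 2 / (4 * lam))
            * |Real.cos ((((n : ℤ) + 2 : ℤ) : ℝ) * s) - Real.cos ((((n : ℤ) + 2 : ℤ) : ℝ) * t)|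
          ≤ Real.exp (-(((n : ℤ) + 2 : ℤ) : ℝ) ^ 2 / (4 * lam)) * (((n : ℝ) + 2) ^ 2 * D) :=
            mul_le_mul_of_nonneg_left h1 (Real.exp_pos _).le
        _ ≤ y ^ (4 * (n + 1)) * (((n : ℝ) + 2) ^ 2 * D) := by
            apply mul_le_mul_of_nonneg_right h2
            exact mul_nonneg (by positivity) hD0
        _ ≤ y ^ (4 * (n + 1)) * (4 * (5 / 2 : ℝ) ^ n * D) := by
            apply mul_le_mul_of_nonneg_left _ (by positivity)
            exact mul_le_mul_of_nonneg_right (sq_le_pow52 n) hD0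
        _ = 4 * D * y ^ 4 * ((5 / 2 : ℝ) * y ^ 4) ^ n := by
            rw [pow_mul, pow_succ, mul_pow]
            ring
    linarith [neg_abs_le (b ((n : ℤ) + 2)), abs_le.mp habs]
  have hgeo : Summable (fun n : ℕ => 4 * D * y ^ 4 * ((5 / 2 : ℝ) * y ^ 4) ^ n) :=
    (summable_geometric_of_lt_one hr0 hr1).mul_left _
  have hlow : -(4 * D * y ^ 4 * (1 - (5 / 2 : ℝ) * y ^ 4)⁻¹) ≤ ∑' n : ℕ, b ((n : ℤ) + 2) := by
    have h := Summable.tsum_le_tsum htail hgeo.neg hB2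
    rw [tsum_neg, tsum_mul_left, tsum_geometric_of_lt_one hr0 hr1] at h
    exact h
  have hfrac : 4 * y ^ 4 * (1 - (5 / 2 : ℝ) * y ^ 4)⁻¹ ≤ y := by
    have hden : (0 : ℝ) < 1 - (5 / 2 : ℝ) * y ^ 4 := by linarith
    rw [← div_eq_mul_inv, div_le_iff₀ hden]
    have h3 : y ^ 3 ≤ (557 / 1000 : ℝ) ^ 3 := pow_le_pow_left₀ hy0.le hy57 3
    have hC : 4 * y ^ 3 + (5 / 2 : ℝ) * y ^ 4 ≤ 1 := by nlinarith [h3, hy4]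
    have hC2 := mul_le_mul_of_nonneg_left hC hy0.le
    nlinarith [hC2]
  have hmid : 0 ≤ ∑' n : ℕ, b ((n : ℤ) + 1) := by
    rw [hshift]
    have hDfrac : 4 * D * y ^ 4 * (1 - (5 / 2 : ℝ) * y ^ 4)⁻¹ ≤ y * D := by
      calc 4 * D * y ^ 4 * (1 - (5 / 2 : ℝ) * y ^ 4)⁻¹
          = D * (4 * y ^ 4 * (1 - (5 / 2 : ℝ) * y ^ 4)⁻¹) := by ring
        _ ≤ D * y := mul_le_mul_of_nonneg_left hfrac hD0
        _ = y * D := by ring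
    nlinarith [hlow, hDfrac]
  rw [hsplit, hzero]
  linarith [hmid]

lemma anti_low {lam s t : ℝ} (hlam : 0 < lam) (hlam' : lam ≤ 21 / 50)
    (h0 : 0 ≤ s) (hst : s ≤ t) (ht : t ≤ π) : E1 lam t ≤ E1 lam s := by
  rw [E1_dual hlam s, E1_dual hlam t]
  exact mul_le_mul_of_nonneg_left (dual_mono hlam hlam' h0 hst ht) (Real.sqrt_nonneg _)

/-! ### The antitonicity statement -/

lemma main_anti {lam : ℝ} (hlam : 0 < lam) : AntitoneOn (E1 lam) (Icc 0 π) := by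
  intro x hx y hy hxy
  rcases le_or_gt lam (21 / 50) with hc | hc
  · exact anti_low hlam hc hx.1 hxy hy.2
  · rcases le_or_gt y (π / 2) with h1 | h1
    · exact anti_mid hc.le hx.1 hxy h1
    · rcases le_or_gt (π / 2) x with h2 | h2
      · exact anti_high hc.le h2 hxy hy.2
      · have ha := anti_high hc.le (le_refl (π / 2)) h1.le hy.2
        have hb := anti_mid hc.le hx.1 h2.le (le_refl (π / 2))
        linarith

/-! ### Symmetry and periodicity -/

lemma E1_neg (lam t : ℝ) : E1 lam (-t) = E1 lam t := by
  rw [E1_def, E1_def]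
  rw [← (Equiv.neg ℤ).tsum_eq (fun k : ℤ => Real.exp (-lam * (t + 2 * (k : ℝ) * π) ^ 2))]
  apply tsum_congr
  intro k
  simp only [Equiv.neg_apply]
  congr 1
  push_cast
  ring

lemma E1_period (lam t : ℝ) (n : ℤ) : E1 lam (t + 2 * π * (n : ℝ)) = E1 lam t := by
  rw [E1_def, E1_def]
  rw [← (Equiv.addRight n).tsum_eq (fun k : ℤ => Real.exp (-lam * (t + 2 * (k : ℝ) * π) ^ 2))]
  apply tsum_congr
  intro k
  simp only [Equiv.coe_addRight]
  congr 1
  push_cast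
  ring

end Stmt15Aux

theorem stmt15 (lam : ℝ) (hlam : 0 < lam) :
    (∀ t : ℝ, E1 lam t ≤ E1 lam 0 ∧ E1 lam Real.pi ≤ E1 lam t) ∧
      AntitoneOn (E1 lam) (Set.Icc 0 Real.pi) := by
  have hpi : (0 : ℝ) < Real.pi := Real.pi_pos
  have hanti : AntitoneOn (E1 lam) (Set.Icc 0 Real.pi) := Stmt15Aux.main_anti hlam
  refine ⟨fun t => ?_, hanti⟩
  have h2π : (0 : ℝ) < 2 * Real.pi := by linarith
  set m : ℤ := ⌊t / (2 * Real.pi) + 1 / 2⌋ with hm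
  have hf1 : (m : ℝ) ≤ t / (2 * Real.pi) + 1 / 2 := Int.floor_le _
  have hf2 : t / (2 * Real.pi) + 1 / 2 < m + 1 := Int.lt_floor_add_one _
  have hdiv : t / (2 * Real.pi) * (2 * Real.pi) = t := div_mul_cancel₀ t (ne_of_gt h2π)
  have hu1 : -Real.pi ≤ t - 2 * Real.pi * m := by nlinarith [hf1, h2π]
  have hu2 : t - 2 * Real.pi * m ≤ Real.pi := by nlinarith [hf2, h2π]
  have hp : E1 lam t = E1 lam (t - 2 * Real.pi * m) := by
    have h := Stmt15Aux.E1_period lam (t - 2 * Real.pi * (m : ℝ)) m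
    rw [show t - 2 * Real.pi * (m : ℝ) + 2 * Real.pi * (m : ℝ) = t by ring] at h
    exact h
  have h0mem : (0 : ℝ) ∈ Set.Icc (0 : ℝ) Real.pi := Set.mem_Icc.mpr ⟨le_refl 0, hpi.le⟩
  have hπmem : Real.pi ∈ Set.Icc (0 : ℝ) Real.pi := Set.mem_Icc.mpr ⟨hpi.le, le_refl _⟩
  rcases le_or_gt 0 (t - 2 * Real.pi * m) with hu0 | hu0
  · have humem : t - 2 * Real.pi * m ∈ Set.Icc (0 : ℝ) Real.pi := Set.mem_Icc.mpr ⟨hu0, hu2⟩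
    have h1 : E1 lam (t - 2 * Real.pi * m) ≤ E1 lam 0 := hanti h0mem humem hu0
    have h2 : E1 lam Real.pi ≤ E1 lam (t - 2 * Real.pi * m) := hanti humem hπmem hu2
    exact ⟨by rw [hp]; exact h1, by rw [hp]; exact h2⟩
  · have hneg : E1 lam (t - 2 * Real.pi * m) = E1 lam (-(t - 2 * Real.pi * m)) :=
      (Stmt15Aux.E1_neg lam (t - 2 * Real.pi * m)).symm
    have hv0 : (0 : ℝ) ≤ -(t - 2 * Real.pi * m) := by linarith
    have hv2 : -(t - 2 * Real.pi * m) ≤ Real.pi := by linarith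
    have hvmem : -(t - 2 * Real.pi * m) ∈ Set.Icc (0 : ℝ) Real.pi := Set.mem_Icc.mpr ⟨hv0, hv2⟩
    have h1 : E1 lam (-(t - 2 * Real.pi * m)) ≤ E1 lam 0 := hanti h0mem hvmem hv0
    have h2 : E1 lam Real.pi ≤ E1 lam (-(t - 2 * Real.pi * m)) := hanti hvmem hπmem hv2
    exact ⟨by rw [hp, hneg]; exact h1, by rw [hp, hneg]; exact h2⟩
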